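/- Let n ≥ 1, a ≥ 0, c ≥ 1 be integers, v a tuple of nonzero integers, and A_{n,k} = (-1)^k·C(n,k)/C(n+k,k). Then (1/n^c)·∑_{k=1}^{n} H_{k-1}(v)·A_{n,k}/k^a = ∑_{k=1}^{n} H_{k-1}(v)·A_{n,k}/k^{a+c} + ∑ over all (j, x) with j ≥ 0, x = (x_1,...,x_r) a nonempty tuple of positive integers with last entry x_r > a and j + x_1 + ... + x_r = a + c, of 2^r·∑_{k=1}^{n} H_{k-1}(x, v)·A_{n,k}/k^j, where (x, v) denotes concatenation. -/

import Mathlib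

open Finset

/-- Sign factor for an alternating multiple harmonic sum entry. -/
def aSgn (s : ℤ) : ℚ := if 0 < s then 1 else -1

/-- Alternating multiple harmonic sum `H_n(s₁,…,s_ℓ)` (strict indices). -/
def Hh : ℕ → List ℤ → ℚ
  | _, [] => 1
  | n, s :: r => ∑ k ∈ Finset.Icc 1 n, aSgn s ^ k / (k : ℚ) ^ s.natAbs * Hh (k - 1) r

/-- Alternating multiple harmonic star sum `H*_n(s₁,…,s_ℓ)` (weak indices). -/
def Hstar : ℕ → List ℤ → ℚ
  | _, [] => 1
  | n, s :: r => ∑ k ∈ Finset.Icc 1 n, aSgn s ^ k / (k : ℚ) ^ s.natAbs * Hstar k r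

/-- All compositions (ordered tuples of positive integers) of `w`. -/
def comps : ℕ → List (List ℕ)
  | 0 => [[]]
  | (w+1) => (List.range (w+1)).flatMap (fun j => (comps (w - j)).map (fun l => (j+1) :: l))
decreasing_by simp_wf

/-- Coerce a list of naturals to a list of integers. -/
def natList (l : List ℕ) : List ℤ := l.map (fun m => (m : ℤ))

/- ### Auxiliary machinery -/

lemma list_sum_range (f : ℕ → ℚ) (n : ℕ) : ((List.range n).map f).sum = ∑ i ∈ range n, f i := by
  induction n with
  | zero => simp
  | succ n ih => rw [List.range_succ, Finset.sum_range_succ, ← ih]; simp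

lemma list_sum_flatMap (l : List ℕ) (g : ℕ → List (List ℕ)) (f : List ℕ → ℚ) :
    ((l.flatMap g).map f).sum = (l.map (fun x => ((g x).map f).sum)).sum := by
  induction l with
  | nil => simp
  | cons a l ih => simp [ih]

lemma tri (n : ℕ) (f : ℕ → ℕ → ℚ) :
    ∑ i ∈ range n, ∑ j ∈ range (n - i), f i j = ∑ j ∈ range n, ∑ i ∈ range (n - j), f i j := by
  apply Finset.sum_comm'
  intro x y; simp only [mem_range]; omega

lemma comps_succ_sum (w : ℕ) (f : List ℕ → ℚ) :
    ((comps (w+1)).map f).sum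
      = ∑ p ∈ range (w+1), ((comps (w-p)).map (fun z => f ((p+1)::z))).sum := by
  rw [comps.eq_2, list_sum_flatMap, list_sum_range]
  refine Finset.sum_congr rfl fun p _ => ?_
  rw [List.map_map]; rfl

lemma comps_last : ∀ (w : ℕ) (f : List ℕ → ℚ),
    ((comps (w+1)).map f).sum
      = ∑ i ∈ range (w+1), ((comps (w-i)).map (fun y => f (y ++ [i+1]))).sum := by
  intro w
  induction w using Nat.strong_induction_on with
  | _ w IH =>
    intro f
    rw [comps_succ_sum, Finset.sum_range_succ, Finset.sum_range_succ]
    have h0 : ((comps (w-w)).map (fun z => f ((w+1)::z))).sum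
        = ((comps (w-w)).map (fun y => f (y ++ [w+1]))).sum := by
      simp [Nat.sub_self, comps]
    rw [h0]
    congr 1
    have hL : ∀ p ∈ range w, ((comps (w-p)).map (fun z => f ((p+1)::z))).sum
        = ∑ i ∈ range (w-p), ((comps (w-1-p-i)).map (fun y => f ((p+1) :: (y ++ [i+1])))).sum := by
      intro p hp
      rw [mem_range] at hp
      have hw : w - p = (w - 1 - p) + 1 := by omega
      rw [hw, IH (w-1-p) (by omega)]
    have hR : ∀ i ∈ range w, ((comps (w-i)).map (fun y => f (y ++ [i+1]))).sum
        = ∑ p ∈ range (w-i), ((comps (w-1-p-i)).map (fun y => f ((p+1) :: (y ++ [i+1])))).sum := by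
      intro i hi
      rw [mem_range] at hi
      have hw : w - i = (w - 1 - i) + 1 := by omega
      rw [hw, comps_succ_sum]
      refine Finset.sum_congr rfl fun p hp => ?_
      have : w - 1 - i - p = w - 1 - p - i := by omega
      rw [this]; rfl
    rw [Finset.sum_congr rfl hL, Finset.sum_congr rfl hR]
    exact tri w _

/- ### The binomial coefficient kernel -/

lemma comps_zero : comps 0 = [[]] := by rw [comps.eq_1]

def Aa (n k : ℕ) : ℚ := (-1 : ℚ) ^ k * (n.choose k) / ((n+k).choose k)

lemma Aa_ratio (n m : ℕ) (h : m < n) :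
    Aa n m * ((n:ℚ) - m) = -Aa n (m+1) * ((n:ℚ) + m + 1) := by
  have hc1 : ((n.choose (m+1) : ℚ)) * (m+1) = (n.choose m : ℚ) * ((n:ℚ) - m) := by
    have := Nat.choose_succ_right_eq n m
    have h2 : ((n.choose (m+1) * (m+1) : ℕ) : ℚ) = ((n.choose m * (n - m) : ℕ) : ℚ) := by
      exact_mod_cast congrArg (Nat.cast : ℕ → ℚ) this
    push_cast [Nat.cast_sub h.le] at h2
    linarith [h2]
  have hc2 : ((n:ℚ) + m + 1) * ((n+m).choose m : ℚ) = (((n+m+1).choose (m+1) : ℚ)) * (m+1) := by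
    have := Nat.add_one_mul_choose_eq (n+m) m
    have h2 : (((n+m+1) * ((n+m).choose m) : ℕ) : ℚ) = (((n+m+1).choose (m+1) * (m+1) : ℕ) : ℚ) := by
      exact_mod_cast congrArg (Nat.cast : ℕ → ℚ) this
    push_cast at h2
    linarith [h2]
  have hne1 : (((n+m).choose m : ℚ)) ≠ 0 := by
    exact_mod_cast Nat.cast_ne_zero.mpr (Nat.choose_pos (Nat.le_add_left m n)).ne'
  have hne2 : (((n+(m+1)).choose (m+1) : ℚ)) ≠ 0 := by
    exact_mod_cast Nat.cast_ne_zero.mpr (Nat.choose_pos (by omega : m+1 ≤ n+(m+1))).ne'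
  have hadd : n + (m+1) = n + m + 1 := by omega
  unfold Aa
  rw [hadd] at hne2 ⊢
  have h3 : (n.choose m : ℚ) * ((n:ℚ)-(m:ℚ)) * (((n+m+1).choose (m+1) : ℚ))
      = (n.choose (m+1) : ℚ) * ((n:ℚ)+(m:ℚ)+1) * (((n+m).choose m : ℚ)) := by
    linear_combination (-(((n+m+1).choose (m+1) : ℚ))) * hc1 - ((n.choose (m+1) : ℚ)) * hc2
  rw [pow_succ]
  field_simp
  linear_combination h3

lemma tailsum (n : ℕ) (hn : 1 ≤ n) : ∀ d m, m + d = n →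
    ∑ k ∈ Finset.Icc (m+1) n, Aa n k = Aa n m * ((m:ℚ) - n) / (2*n) := by
  intro d
  induction d with
  | zero =>
    intro m hm
    subst hm
    simp [Finset.Icc_eq_empty_of_lt (by omega : m < m + 1)]
  | succ d IH =>
    intro m hm
    have hmn : m < n := by omega
    have hins : Finset.Icc (m+1) n = insert (m+1) (Finset.Icc (m+2) n) := by
      ext x; simp [Finset.mem_Icc, Finset.mem_insert]; omega
    rw [hins, Finset.sum_insert (by simp), IH (m+1) (by omega)]
    have hr := Aa_ratio n m hmn
    have hne : (n:ℚ) - m ≠ 0 := by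
      have : (m:ℚ) < n := by exact_mod_cast hmn
      linarith
    have hnn : (n:ℚ) ≠ 0 := by positivity
    field_simp
    push_cast
    linear_combination hr

/- ### The sums S and R -/

def S (n a : ℕ) (v : List ℤ) : ℚ :=
  ∑ k ∈ Finset.Icc 1 n, Hh (k-1) v * Aa n k / (k : ℚ) ^ a

def R (n a c : ℕ) (v : List ℤ) : ℚ :=
  ∑ i ∈ Finset.range c, ∑ j ∈ Finset.range (c - i),
    ((comps (c - 1 - i - j)).map (fun y =>
      (2 : ℚ) ^ (y.length + 1) * S n j (natList (y ++ [a + i + 1]) ++ v))).sum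

lemma Hh_cons_nat (k a : ℕ) (v : List ℤ) :
    Hh k ((((a+1:ℕ)) : ℤ) :: v)
      = ∑ m ∈ Finset.Icc 1 k, 1/(m:ℚ)^(a+1) * Hh (m-1) v := by
  simp only [Hh]
  refine Finset.sum_congr rfl fun m _ => ?_
  have hs : aSgn ((a+1:ℕ) : ℤ) = 1 := by
    simp [aSgn]
  have hna : (((a+1:ℕ) : ℤ)).natAbs = a+1 := by omega
  rw [hs, hna, one_pow]

lemma base (n a : ℕ) (hn : 1 ≤ n) (v : List ℤ) :
    (1/(n:ℚ)) * S n a v = S n (a+1) v + 2 * S n 0 ((((a+1:ℕ)) : ℤ) :: v) := by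
  have hnn : (n:ℚ) ≠ 0 := by positivity
  have h2 : S n 0 ((((a+1:ℕ)) : ℤ) :: v)
      = ∑ m ∈ Finset.Icc 1 n,
          (1/(m:ℚ)^(a+1) * Hh (m-1) v) * (Aa n m * ((m:ℚ) - n) / (2*n)) := by
    unfold S
    have hk : ∀ k ∈ Finset.Icc 1 n,
        Hh (k-1) ((((a+1:ℕ)) : ℤ) :: v) * Aa n k / (k:ℚ)^0
          = ∑ m ∈ Finset.Icc 1 (k-1), (1/(m:ℚ)^(a+1) * Hh (m-1) v) * Aa n k := by
      intro k _
      rw [Hh_cons_nat, pow_zero, div_one, Finset.sum_mul]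
    rw [Finset.sum_congr rfl hk]
    rw [Finset.sum_comm' (t' := Finset.Icc 1 n) (s' := fun m => Finset.Icc (m+1) n)
      (by intro k m; simp only [Finset.mem_Icc]; omega)]
    refine Finset.sum_congr rfl fun m hm => ?_
    rw [← Finset.mul_sum, tailsum n hn (n - m) m (by rw [Finset.mem_Icc] at hm; omega)]
  rw [h2]
  unfold S
  rw [Finset.mul_sum, Finset.mul_sum, ← Finset.sum_add_distrib]
  refine Finset.sum_congr rfl fun m hm => ?_
  rw [Finset.mem_Icc] at hm
  have hm0 : (m:ℚ) ≠ 0 := by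
    have : 0 < m := hm.1
    positivity
  field_simp
  ring

/- ### Recursion for R -/

lemma Rrec (n a c : ℕ) (v : List ℤ) :
    R n a (c+1) v = R n (a+1) c v + 2 * S n c ((((a+1:ℕ)) : ℤ) :: v)
      + 2 * R n 0 c ((((a+1:ℕ)) : ℤ) :: v) := by
  unfold R
  rw [Finset.sum_range_succ']
  have hshift : ∑ i ∈ range c, ∑ j ∈ range (c + 1 - (i+1)),
        ((comps (c + 1 - 1 - (i+1) - j)).map (fun y =>
          (2:ℚ) ^ (y.length + 1) * S n j (natList (y ++ [a + (i+1) + 1]) ++ v))).sum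
      = ∑ i ∈ range c, ∑ j ∈ range (c - i),
        ((comps (c - 1 - i - j)).map (fun y =>
          (2:ℚ) ^ (y.length + 1) * S n j (natList (y ++ [(a+1) + i + 1]) ++ v))).sum := by
    refine Finset.sum_congr rfl fun i hi => ?_
    have e1 : c + 1 - (i+1) = c - i := by omega
    rw [e1]
    refine Finset.sum_congr rfl fun j hj => ?_
    have e2 : c + 1 - 1 - (i+1) - j = c - 1 - i - j := by omega
    have e3 : a + (i+1) + 1 = (a+1) + i + 1 := by omega
    rw [e2, e3]
  rw [hshift]
  have hzero : ∑ j ∈ range (c + 1 - 0),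
        ((comps (c + 1 - 1 - 0 - j)).map (fun y =>
          (2:ℚ) ^ (y.length + 1) * S n j (natList (y ++ [a + 0 + 1]) ++ v))).sum
      = 2 * S n c ((((a+1:ℕ)) : ℤ) :: v) + 2 * (∑ i ∈ range c, ∑ j ∈ range (c - i),
          ((comps (c - 1 - i - j)).map (fun y =>
            (2:ℚ) ^ (y.length + 1)
              * S n j (natList (y ++ [0 + i + 1]) ++ ((((a+1:ℕ)) : ℤ) :: v)))).sum) := by
    have e0 : c + 1 - 0 = c + 1 := by omega
    rw [e0, Finset.sum_range_succ]
    have etop : c + 1 - 1 - 0 - c = 0 := by omega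
    rw [etop]
    have htop : ((comps 0).map (fun y =>
          (2:ℚ) ^ (y.length + 1) * S n c (natList (y ++ [a + 0 + 1]) ++ v))).sum
        = 2 * S n c ((((a+1:ℕ)) : ℤ) :: v) := by
      rw [comps_zero]
      simp [natList]
    rw [htop]
    have hmain : ∀ j ∈ range c, ((comps (c + 1 - 1 - 0 - j)).map (fun y =>
          (2:ℚ) ^ (y.length + 1) * S n j (natList (y ++ [a + 0 + 1]) ++ v))).sum
        = ∑ i ∈ range (c - j),
            ((comps (c - 1 - j - i)).map (fun y =>
              2 * ((2:ℚ) ^ (y.length + 1)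
                * S n j (natList (y ++ [i + 1]) ++ ((((a+1:ℕ)) : ℤ) :: v))))).sum := by
      intro j hj
      rw [mem_range] at hj
      have e4 : c + 1 - 1 - 0 - j = (c - 1 - j) + 1 := by omega
      rw [e4, comps_last]
      have e5 : c - 1 - j + 1 = c - j := by omega
      rw [e5]
      refine Finset.sum_congr rfl fun i hi => ?_
      refine congrArg List.sum (List.map_congr_left fun y _ => ?_)
      have hlen : (y ++ [i+1]).length + 1 = y.length + 1 + 1 := by simp
      have hlist : natList ((y ++ [i+1]) ++ [a + 0 + 1]) ++ v
          = natList (y ++ [i + 1]) ++ ((((a+1:ℕ)) : ℤ) :: v) := by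
        simp [natList]
      rw [hlen, hlist, pow_succ]
      ring
    rw [Finset.sum_congr rfl hmain]
    have hpull : ∀ j ∈ range c, ∑ i ∈ range (c - j),
          ((comps (c - 1 - j - i)).map (fun y =>
            2 * ((2:ℚ) ^ (y.length + 1)
              * S n j (natList (y ++ [i + 1]) ++ ((((a+1:ℕ)) : ℤ) :: v))))).sum
        = ∑ i ∈ range (c - j), 2 *
          ((comps (c - 1 - j - i)).map (fun y =>
            (2:ℚ) ^ (y.length + 1)
              * S n j (natList (y ++ [i + 1]) ++ ((((a+1:ℕ)) : ℤ) :: v)))).sum := by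
      intro j hj
      refine Finset.sum_congr rfl fun i hi => ?_
      rw [← List.sum_map_mul_left]
    rw [Finset.sum_congr rfl hpull, add_comm]
    congr 1
    rw [tri c (fun j i => 2 * ((comps (c - 1 - j - i)).map (fun y =>
      (2:ℚ) ^ (y.length + 1)
        * S n j (natList (y ++ [i + 1]) ++ ((((a+1:ℕ)) : ℤ) :: v)))).sum)]
    rw [Finset.mul_sum]
    refine Finset.sum_congr rfl fun i hi => ?_
    rw [Finset.mul_sum]
    refine Finset.sum_congr rfl fun j hj => ?_
    have e6 : c - 1 - j - i = c - 1 - i - j := by omega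
    have e7 : 0 + i + 1 = i + 1 := by omega
    rw [e6, e7]
  rw [hzero]
  ring

/- ### Main identity -/

lemma key (n : ℕ) (hn : 1 ≤ n) : ∀ (c a : ℕ) (v : List ℤ),
    (1/(n:ℚ)^c) * S n a v = S n (a+c) v + R n a c v := by
  intro c
  induction c with
  | zero =>
    intro a v
    simp [R]
  | succ c IH =>
    intro a v
    have h1 : (1/(n:ℚ)^(c+1)) * S n a v = (1/(n:ℚ)^c) * ((1/(n:ℚ)) * S n a v) := by
      rw [pow_succ]; ring
    rw [h1, base n a hn v, mul_add, IH (a+1) v]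
    rw [show (1/(n:ℚ)^c) * (2 * S n 0 ((((a+1:ℕ)) : ℤ) :: v))
        = 2 * ((1/(n:ℚ)^c) * S n 0 ((((a+1:ℕ)) : ℤ) :: v)) from by ring]
    rw [IH 0 ((((a+1:ℕ)) : ℤ) :: v)]
    rw [Rrec n a c v]
    have e1 : a + 1 + c = a + (c+1) := by omega
    have e2 : 0 + c = c := by omega
    rw [e1, e2]
    ring

theorem stmt16 (n a c : ℕ) (hn : 1 ≤ n) (hc : 1 ≤ c) (v : List ℤ)
    (hv : ∀ s ∈ v, s ≠ 0) :
    (1 / (n : ℚ) ^ c) * ∑ k ∈ Finset.Icc 1 n,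
        Hh (k-1) v * ((-1 : ℚ) ^ k * (n.choose k) / ((n+k).choose k)) / (k : ℚ) ^ a
      = (∑ k ∈ Finset.Icc 1 n,
          Hh (k-1) v * ((-1 : ℚ) ^ k * (n.choose k) / ((n+k).choose k)) / (k : ℚ) ^ (a+c))
        + ∑ i ∈ Finset.range c, ∑ j ∈ Finset.range (c - i),
            ((comps (c - 1 - i - j)).map (fun y =>
              (2 : ℚ) ^ (y.length + 1) * ∑ k ∈ Finset.Icc 1 n,
                Hh (k-1) (natList (y ++ [a + i + 1]) ++ v)
                  * ((-1 : ℚ) ^ k * (n.choose k) / ((n+k).choose k))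
                  / (k : ℚ) ^ j)).sum := by
  have h := key n hn c a v
  simp only [S, R, Aa] at h
  exact h
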